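/- arXiv:1907.01433 — 4 statements merged into one kernel-verified Lean document; each statement's English description precedes it below -/
import Mathlib

section
/- Let d ≥ 1 be an integer, k ∈ {0,…,d−1}, z ≥ 1 a real number, ε ∈ (0,1), and r > 1 a real number. Let S be a nonempty affine k-subspace of ℝ^d with D_z(0_d, S) ≥ ε·r, let S'' = {(x | r) : x ∈ S} ⊆ ℝ^{d+1}, let S' be the linear span of S'' in ℝ^{d+1}, and let e_{d+1} = (0,…,0,1) ∈ ℝ^{d+1}. Then D_z(r·e_{d+1}, S') ≥ ε·r / 2^z. -/
/-- `(q | r) ∈ ℝ^{d+1}`: the point `q ∈ ℝ^d` with the coordinate `r` appended. -/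
noncomputable def lift {d : ℕ} (q : EuclideanSpace ℝ (Fin d)) (r : ℝ) :
    EuclideanSpace ℝ (Fin (d + 1)) :=
  WithLp.toLp 2 (Fin.snoc (α := fun _ => ℝ) (WithLp.ofLp q) r)

/-- The first `n` coordinates of a vector in `ℝ^{n+1}`. -/
noncomputable def initE {n : ℕ} (w : EuclideanSpace ℝ (Fin (n + 1))) :
    EuclideanSpace ℝ (Fin n) :=
  WithLp.toLp 2 (fun i => w (Fin.castSucc i))

/-- A single coordinate is bounded by the Euclidean norm. -/
lemma abs_coord_le_norm {n : ℕ} (w : EuclideanSpace ℝ (Fin n)) (j : Fin n) :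
    |w j| ≤ ‖w‖ := by
  rw [EuclideanSpace.norm_eq]
  have h1 : ‖w j‖ ^ 2 ≤ ∑ i, ‖w i‖ ^ 2 :=
    Finset.single_le_sum (f := fun i => ‖w i‖ ^ 2) (fun i _ => by positivity)
      (Finset.mem_univ j)
  calc |w j| = Real.sqrt (‖w j‖ ^ 2) := by
        rw [Real.sqrt_sq (norm_nonneg _), Real.norm_eq_abs]
    _ ≤ _ := Real.sqrt_le_sqrt h1

/-- The initial part of a vector has smaller norm. -/
lemma norm_init_le {n : ℕ} (w : EuclideanSpace ℝ (Fin (n + 1))) :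
    ‖initE w‖ ≤ ‖w‖ := by
  rw [EuclideanSpace.norm_eq, EuclideanSpace.norm_eq]
  apply Real.sqrt_le_sqrt
  rw [Fin.sum_univ_castSucc]
  have h : (0:ℝ) ≤ ‖w (Fin.last n)‖ ^ 2 := by positivity
  have heq : ∑ i : Fin n, ‖initE w i‖ ^ 2 = ∑ i : Fin n, ‖w (Fin.castSucc i)‖ ^ 2 := rfl
  rw [heq]
  linarith

/-- Let `z ≥ 1`, `ε ∈ (0,1)`, `r > 1`. If `S` is a nonempty affine
`k`-subspace of `ℝ^d` with `D_z(0,S) ≥ εr`, `S'' = {(x|r) : x ∈ S}`, `S'` the linear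
span of `S''` in `ℝ^{d+1}`, and `e_{d+1} = (0,…,0,1)`, then
`D_z(r·e_{d+1},S') ≥ εr/2^z`. -/
theorem stmt7 (d k : ℕ) (hd : 1 ≤ d) (hk : k ≤ d - 1)
    (z ε r : ℝ) (hz : 1 ≤ z) (hε : ε ∈ Set.Ioo (0 : ℝ) 1) (hrr : 1 < r)
    (S : AffineSubspace ℝ (EuclideanSpace ℝ (Fin d)))
    (hS : (S : Set (EuclideanSpace ℝ (Fin d))).Nonempty)
    (hdim : Module.finrank ℝ S.direction = k)
    (hfar : ε * r ≤ Metric.infDist 0 (S : Set (EuclideanSpace ℝ (Fin d))) ^ z)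
    (e : EuclideanSpace ℝ (Fin (d + 1))) (he : e = lift 0 1)
    (S' : Submodule ℝ (EuclideanSpace ℝ (Fin (d + 1))))
    (hS' : S' = Submodule.span ℝ
      ((fun x => lift x r) '' (S : Set (EuclideanSpace ℝ (Fin d))))) :
    ε * r / 2 ^ z ≤ Metric.infDist (r • e) (S' : Set (EuclideanSpace ℝ (Fin (d + 1)))) ^ z := by
  obtain ⟨p₀, hp₀⟩ := hS
  obtain ⟨hε0, hε1⟩ := hε
  have hr0 : (0:ℝ) < r := lt_trans one_pos hrr
  set δ := Metric.infDist 0 (S : Set (EuclideanSpace ℝ (Fin d))) with hδdef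
  clear_value δ
  have hδnn : 0 ≤ δ := hδdef ▸ Metric.infDist_nonneg
  have hδ0 : 0 < δ := by
    rcases hδnn.lt_or_eq with h | h
    · exact h
    · exfalso
      rw [← h, Real.zero_rpow (by linarith)] at hfar
      nlinarith
  -- Key: every element of the span satisfies a linear constraint.
  have key : ∀ y ∈ S', initE y - (y (Fin.last d) / r) • p₀ ∈ S.direction := by
    intro y hy
    rw [hS'] at hy
    induction hy using Submodule.span_induction with
    | mem x hx =>
      obtain ⟨q, hq, rfl⟩ := hx
      show initE (lift q r) - (lift q r (Fin.last d) / r) • p₀ ∈ S.direction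
      have h1 : initE (lift q r) = q := by
        ext i
        simp [initE, lift, Fin.snoc_castSucc]
      have h2 : lift q r (Fin.last d) = r := by simp [lift]
      rw [h1, h2, div_self hr0.ne', one_smul]
      exact AffineSubspace.vsub_mem_direction hq hp₀
    | zero =>
      have h1 : initE (0 : EuclideanSpace ℝ (Fin (d+1))) = 0 := by
        ext i; simp [initE]
      have h2 : (0 : EuclideanSpace ℝ (Fin (d+1))) (Fin.last d) = 0 := rfl
      rw [h1, h2]
      simp
    | add a b ha hb iha ihb =>
      have heq : initE (a + b) - ((a + b) (Fin.last d) / r) • p₀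
          = (initE a - (a (Fin.last d) / r) • p₀)
            + (initE b - (b (Fin.last d) / r) • p₀) := by
        ext i
        simp only [initE, WithLp.ofLp_toLp, PiLp.add_apply, PiLp.sub_apply, PiLp.smul_apply, smul_eq_mul]
        ring
      rw [heq]
      exact Submodule.add_mem _ iha ihb
    | smul c a ha iha =>
      have heq : initE (c • a) - ((c • a) (Fin.last d) / r) • p₀
          = c • (initE a - (a (Fin.last d) / r) • p₀) := by
        ext i
        simp only [initE, WithLp.ofLp_toLp, PiLp.smul_apply, PiLp.sub_apply, smul_eq_mul]
        ring
      rw [heq]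
      exact Submodule.smul_mem _ _ iha
  -- Pointwise distance lower bound
  have main : ∀ y ∈ S', min (r / 2) (δ / 2) ≤ dist (r • e) y := by
    intro y hy
    have hv := key y hy
    set t : ℝ := y (Fin.last d) / r with ht
    rw [dist_eq_norm]
    rcases le_or_gt (1/2 : ℝ) |1 - t| with h1 | h1
    · -- last coordinate is far
      have hlast : (r • e - y) (Fin.last d) = r * (1 - t) := by
        have he1 : e (Fin.last d) = 1 := by rw [he]; simp [lift]
        simp only [PiLp.sub_apply, PiLp.smul_apply, he1, smul_eq_mul, ht]
        field_simp
      have hb := abs_coord_le_norm (r • e - y) (Fin.last d)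
      rw [hlast, abs_mul, abs_of_pos hr0] at hb
      have h2 : r / 2 ≤ ‖r • e - y‖ := by nlinarith
      exact le_trans (min_le_left _ _) h2
    · -- last coordinate close: t > 1/2
      have ht2 : (1/2 : ℝ) < t := by
        have h := abs_lt.mp h1
        linarith [h.1, h.2]
      have ht0 : t ≠ 0 := by linarith
      set v : EuclideanSpace ℝ (Fin d) := initE y - t • p₀ with hvdef
      set q : EuclideanSpace ℝ (Fin d) := t⁻¹ • v + p₀ with hqdef
      have hqS : q ∈ S := by
        have hh : t⁻¹ • v +ᵥ p₀ ∈ S :=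
          AffineSubspace.vadd_mem_of_mem_direction (Submodule.smul_mem _ _ hv) hp₀
        simpa [hqdef, vadd_eq_add] using hh
      have hqnorm : δ ≤ ‖q‖ := by
        have hh := Metric.infDist_le_dist_of_mem
          (x := (0 : EuclideanSpace ℝ (Fin d))) hqS
        rw [dist_zero_left] at hh
        exact hδdef ▸ hh
      have hyq : initE y = t • q := by
        rw [hqdef, smul_add, smul_smul, mul_inv_cancel₀ ht0, one_smul, hvdef]
        abel
      have hnormy : δ / 2 ≤ ‖initE y‖ := by
        rw [hyq, norm_smul, Real.norm_eq_abs, abs_of_pos (by linarith : (0:ℝ) < t)]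
        nlinarith [norm_nonneg q]
      have hinit : initE (r • e - y) = -(initE y) := by
        ext i
        have he0 : e (Fin.castSucc i) = 0 := by rw [he]; simp [lift]
        simp [initE, PiLp.sub_apply, PiLp.smul_apply, he0, smul_eq_mul]
      have hb := norm_init_le (r • e - y)
      rw [hinit, norm_neg] at hb
      exact le_trans (min_le_right _ _) (le_trans hnormy hb)
  -- conclude
  have hS'ne : (S' : Set (EuclideanSpace ℝ (Fin (d + 1)))).Nonempty :=
    ⟨0, Submodule.zero_mem _⟩
  set I := Metric.infDist (r • e) (S' : Set (EuclideanSpace ℝ (Fin (d + 1)))) with hIdef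
  have hI : min (r / 2) (δ / 2) ≤ I := by
    by_contra h
    push_neg at h
    obtain ⟨y, hy, hlt⟩ := (Metric.infDist_lt_iff hS'ne).mp h
    exact absurd hlt (not_lt.mpr (main y hy))
  clear_value I
  clear main key hδdef hS' hp₀ hdim hS'ne he
  clear hIdef
  clear S' e S
  have hmpos : (0:ℝ) < min (r / 2) (δ / 2) := lt_min (by linarith) (by linarith)
  have hpow : min (r / 2) (δ / 2) ^ z ≤ I ^ z :=
    Real.rpow_le_rpow hmpos.le hI (by linarith)
  refine le_trans ?_ hpow
  have h2z : (0:ℝ) < 2 ^ z := Real.rpow_pos_of_pos two_pos z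
  rcases le_total δ r with hc | hc
  · have hmin : min (r / 2) (δ / 2) = δ / 2 := min_eq_right (by linarith)
    rw [hmin, Real.div_rpow hδnn (by norm_num)]
    gcongr
  · have hmin : min (r / 2) (δ / 2) = r / 2 := min_eq_left (by linarith)
    rw [hmin, Real.div_rpow hr0.le (by norm_num)]
    have hr1 : ε * r ≤ r ^ z := by
      have h1 : r ^ (1:ℝ) ≤ r ^ z := Real.rpow_le_rpow_of_exponent_le hrr.le hz
      rw [Real.rpow_one] at h1
      nlinarith
    gcongr
end

section
/- Let d ≥ 1 be an integer, k ∈ {0,…,d−1}, and r > 0 a real number. Let S' be a (k+1)-dimensional linear subspace of ℝ^{d+1} that is not orthogonal to e_{d+1} = (0,…,0,1) ∈ ℝ^{d+1} (equivalently, S' is not contained in the hyperplane {x ∈ ℝ^{d+1} : x_{d+1} = 0}). Then the set S = {x ∈ ℝ^d : (x | r) ∈ S'} is a nonempty affine subspace of ℝ^d whose direction has dimension k, S' is the linear span of S'' = {(x | r) : x ∈ S}, and dist(r·e_{d+1}, S') / r = dist(0_d, S) / √(dist(0_d, S)² + r²). -/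
open scoped RealInnerProductSpace

section Aux

variable {d : ℕ}

lemma lift_apply_castSucc (a : EuclideanSpace ℝ (Fin d)) (b : ℝ) (i : Fin d) :
    lift a b i.castSucc = a i := by simp [lift]

lemma lift_apply_last (a : EuclideanSpace ℝ (Fin d)) (b : ℝ) :
    lift a b (Fin.last d) = b := by simp [lift]

lemma lift_add (a c : EuclideanSpace ℝ (Fin d)) (b f : ℝ) :
    lift a b + lift c f = lift (a + c) (b + f) := by
  ext i
  refine Fin.lastCases ?_ (fun j => ?_) i <;>
    simp [lift, Fin.snoc_last, Fin.snoc_castSucc]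

lemma lift_smul (c : ℝ) (a : EuclideanSpace ℝ (Fin d)) (b : ℝ) :
    c • lift a b = lift (c • a) (c * b) := by
  ext i
  refine Fin.lastCases ?_ (fun j => ?_) i <;>
    simp [lift, Fin.snoc_last, Fin.snoc_castSucc]

lemma lift_sub (a c : EuclideanSpace ℝ (Fin d)) (b f : ℝ) :
    lift a b - lift c f = lift (a - c) (b - f) := by
  ext i
  refine Fin.lastCases ?_ (fun j => ?_) i <;>
    simp [lift, Fin.snoc_last, Fin.snoc_castSucc]

lemma lift_self (y : EuclideanSpace ℝ (Fin (d + 1))) :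
    lift (WithLp.toLp 2 fun (i : Fin d) => y i.castSucc) (y (Fin.last d)) = y := by
  ext i
  refine Fin.lastCases ?_ (fun j => ?_) i <;>
    simp [lift, Fin.snoc_last, Fin.snoc_castSucc]

lemma inner_lift (a c : EuclideanSpace ℝ (Fin d)) (b f : ℝ) :
    ⟪lift a b, lift c f⟫ = ⟪a, c⟫ + b * f := by
  simp [PiLp.inner_apply, Fin.sum_univ_castSucc, lift, Fin.snoc_last, Fin.snoc_castSucc,
    RCLike.inner_apply, conj_trivial]
  ring

lemma norm_lift_sq (a : EuclideanSpace ℝ (Fin d)) (b : ℝ) :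
    ‖lift a b‖ ^ 2 = ‖a‖ ^ 2 + b ^ 2 := by
  rw [← real_inner_self_eq_norm_sq, ← real_inner_self_eq_norm_sq, inner_lift]; ring

lemma infDist_eq_of_orth {E : Type*} [NormedAddCommGroup E] [InnerProductSpace ℝ E]
    (u v : E) (s : Set E) (hv : v ∈ s)
    (h : ∀ w ∈ s, ⟪u - v, v - w⟫ = 0) :
    Metric.infDist u s = ‖u - v‖ := by
  refine le_antisymm ((Metric.infDist_le_dist_of_mem hv).trans_eq (by rw [dist_eq_norm])) ?_
  by_contra hlt
  push_neg at hlt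
  obtain ⟨w, hw, hdw⟩ := (Metric.infDist_lt_iff ⟨v, hv⟩).1 hlt
  rw [dist_eq_norm] at hdw
  have h2 : ‖u - w‖ ^ 2 = ‖u - v‖ ^ 2 + ‖v - w‖ ^ 2 := by
    have h3 := norm_add_sq_real (u - v) (v - w)
    rw [h w hw] at h3
    simpa [sub_add_sub_cancel] using h3
  nlinarith [norm_nonneg (u - w), norm_nonneg (u - v), norm_nonneg (v - w)]

end Aux

set_option maxHeartbeats 1000000 in
/-- Let `r > 0` and let `S'` be a `(k+1)`-dimensional linear subspace of
`ℝ^{d+1}` that is not orthogonal to `e_{d+1} = (0,…,0,1)` (equivalently, not contained in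
the hyperplane `{x : x_{d+1} = 0}`). Then `S = {x ∈ ℝ^d : (x|r) ∈ S'}` is a nonempty
affine subspace of `ℝ^d` whose direction has dimension `k`, `S'` is the linear span of
`S'' = {(x|r) : x ∈ S}`, and
`dist(r·e_{d+1},S')/r = dist(0,S)/√(dist(0,S)² + r²)`. -/
theorem stmt8 (d k : ℕ) (hd : 1 ≤ d) (hk : k ≤ d - 1)
    (r : ℝ) (hr : 0 < r)
    (e : EuclideanSpace ℝ (Fin (d + 1))) (he : e = lift 0 1)
    (S' : Submodule ℝ (EuclideanSpace ℝ (Fin (d + 1))))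
    (hdim : Module.finrank ℝ S' = k + 1)
    (hno : ¬ ∀ y ∈ S', ⟪y, e⟫ = (0 : ℝ)) :
    ∃ A : AffineSubspace ℝ (EuclideanSpace ℝ (Fin d)),
      (A : Set (EuclideanSpace ℝ (Fin d))) =
          {x : EuclideanSpace ℝ (Fin d) | lift x r ∈ S'} ∧
      (A : Set (EuclideanSpace ℝ (Fin d))).Nonempty ∧
      Module.finrank ℝ A.direction = k ∧
      Submodule.span ℝ ((fun x => lift x r) '' (A : Set (EuclideanSpace ℝ (Fin d)))) = S' ∧
      Metric.infDist (r • e) (S' : Set (EuclideanSpace ℝ (Fin (d + 1)))) / r =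
        Metric.infDist 0 (A : Set (EuclideanSpace ℝ (Fin d))) /
          Real.sqrt (Metric.infDist 0 (A : Set (EuclideanSpace ℝ (Fin d))) ^ 2 + r ^ 2) := by
  classical
  -- The linear embedding `x ↦ (x | 0)`.
  set L : EuclideanSpace ℝ (Fin d) →ₗ[ℝ] EuclideanSpace ℝ (Fin (d + 1)) :=
    { toFun := fun x => lift x 0
      map_add' := fun x y => by rw [lift_add, add_zero]
      map_smul' := fun c x => by rw [RingHom.id_apply, lift_smul, mul_zero] } with hLdef
  have hLapp : ∀ x, L x = lift x 0 := fun x => rfl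
  have hL_inj : Function.Injective L := by
    intro x y hxy
    ext i
    have := congrArg (fun w => w i.castSucc) hxy
    simpa [hLapp, lift_apply_castSucc] using this
  -- a point of `S'` with nonzero last coordinate
  push_neg at hno
  obtain ⟨y, hyS, hy0⟩ := hno
  have hinner_e : ∀ z : EuclideanSpace ℝ (Fin (d + 1)), ⟪z, e⟫ = z (Fin.last d) := by
    intro z
    conv_lhs => rw [he, ← lift_self z]
    rw [inner_lift]
    simp
  have hy_last : y (Fin.last d) ≠ 0 := by
    rw [← hinner_e y]; exact hy0
  set z : EuclideanSpace ℝ (Fin (d + 1)) := (r / y (Fin.last d)) • y with hzdef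
  have hzS : z ∈ S' := S'.smul_mem _ hyS
  have hz_last : z (Fin.last d) = r := by
    simp [hzdef, PiLp.smul_apply]
    field_simp
  set x₀ : EuclideanSpace ℝ (Fin d) := WithLp.toLp 2 fun (i : Fin d) => z i.castSucc with hx₀def
  have hx₀lift : lift x₀ r = z := by
    rw [← hz_last]; exact lift_self z
  have hx₀S : lift x₀ r ∈ S' := hx₀lift ▸ hzS
  -- the direction and the affine subspace
  set V : Submodule ℝ (EuclideanSpace ℝ (Fin d)) := S'.comap L with hVdef
  set A : AffineSubspace ℝ (EuclideanSpace ℝ (Fin d)) := AffineSubspace.mk' x₀ V with hAdef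
  have hx₀A : x₀ ∈ A := AffineSubspace.self_mem_mk' _ _
  have hA : ∀ x, x ∈ A ↔ lift x r ∈ S' := by
    intro x
    rw [hAdef, AffineSubspace.mem_mk']
    have hvs : (x -ᵥ x₀ : EuclideanSpace ℝ (Fin d)) = x - x₀ := rfl
    have hmem : x - x₀ ∈ V ↔ lift (x - x₀) 0 ∈ S' := Iff.rfl
    rw [hvs, hmem]
    have hsplit : lift x r = lift (x - x₀) 0 + lift x₀ r := by
      rw [lift_add]; norm_num
    constructor
    · intro h; rw [hsplit]; exact S'.add_mem h hx₀S
    · intro h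
      have : lift x r - lift x₀ r ∈ S' := S'.sub_mem h hx₀S
      rwa [lift_sub, sub_self] at this
  have hAset : (A : Set (EuclideanSpace ℝ (Fin d))) =
      {x : EuclideanSpace ℝ (Fin d) | lift x r ∈ S'} := by
    ext x; exact hA x
  refine ⟨A, hAset, ⟨x₀, hx₀A⟩, ?_, ?_, ?_⟩
  · -- finrank of direction
    rw [hAdef, AffineSubspace.direction_mk']
    have hVmap : Submodule.map L V = LinearMap.range L ⊓ S' := Submodule.map_comap_eq L S'
    have h1 : Module.finrank ℝ V = Module.finrank ℝ (LinearMap.range L ⊓ S' : Submodule ℝ _) := by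
      rw [← hVmap]
      exact (Submodule.equivMapOfInjective L hL_inj V).finrank_eq
    have hz_not : z ∉ LinearMap.range L := by
      rintro ⟨w, hw⟩
      have := congrArg (fun u => u (Fin.last d)) hw
      rw [hz_last] at this
      simp only [hLapp] at this
      rw [lift_apply_last] at this
      exact hr.ne this
    have hrange_rank : Module.finrank ℝ (LinearMap.range L) = d := by
      rw [LinearMap.finrank_range_of_inj hL_inj, finrank_euclideanSpace_fin]
    have hsup : Module.finrank ℝ (S' ⊔ LinearMap.range L : Submodule ℝ _) = d + 1 := by
      have hle : Module.finrank ℝ (S' ⊔ LinearMap.range L : Submodule ℝ _) ≤ d + 1 := by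
        have := Submodule.finrank_le (S' ⊔ LinearMap.range L)
        rwa [finrank_euclideanSpace_fin] at this
      have hlt : LinearMap.range L < S' ⊔ LinearMap.range L := by
        refine lt_of_le_of_ne le_sup_right ?_
        intro hEq
        exact hz_not (hEq ▸ Submodule.mem_sup_left hzS)
      have := Submodule.finrank_lt_finrank_of_lt hlt
      rw [hrange_rank] at this
      omega
    have hkey := Submodule.finrank_sup_add_finrank_inf_eq S' (LinearMap.range L)
    rw [hsup, hdim, hrange_rank] at hkey
    have hinf : Module.finrank ℝ (LinearMap.range L ⊓ S' : Submodule ℝ _) =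
        Module.finrank ℝ (S' ⊓ LinearMap.range L : Submodule ℝ _) := by rw [inf_comm]
    omega
  · -- span
    apply le_antisymm
    · rw [Submodule.span_le]
      rintro _ ⟨x, hx, rfl⟩
      exact (hA x).1 hx
    · intro w hw
      set t : ℝ := w (Fin.last d) / r with ht
      have hp₀span : lift x₀ r ∈
          Submodule.span ℝ ((fun x => lift x r) '' (A : Set (EuclideanSpace ℝ (Fin d)))) :=
        Submodule.subset_span ⟨x₀, hx₀A, rfl⟩
      have hw2 : w - t • lift x₀ r ∈ S' := S'.sub_mem hw (S'.smul_mem _ hx₀S)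
      have hlast : (w - t • lift x₀ r) (Fin.last d) = 0 := by
        have hPl : lift x₀ r (Fin.last d) = r := lift_apply_last _ _
        simp only [PiLp.sub_apply, PiLp.smul_apply, hPl, ht, smul_eq_mul]
        field_simp
        ring
      set v : EuclideanSpace ℝ (Fin d) := WithLp.toLp 2 fun (i : Fin d) => (w - t • lift x₀ r) i.castSucc with hv
      have hveq : lift v 0 = w - t • lift x₀ r := by
        rw [← hlast]; exact lift_self _
      have hxv : x₀ + v ∈ A := by
        rw [hA]
        have hsplit : lift (x₀ + v) r = lift x₀ r + lift v 0 := by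
          rw [lift_add, add_zero]
        rw [hsplit, hveq]
        exact S'.add_mem hx₀S hw2
      have hvspan : lift v 0 ∈
          Submodule.span ℝ ((fun x => lift x r) '' (A : Set (EuclideanSpace ℝ (Fin d)))) := by
        have h1 : lift (x₀ + v) r ∈
            Submodule.span ℝ ((fun x => lift x r) '' (A : Set (EuclideanSpace ℝ (Fin d)))) :=
          Submodule.subset_span ⟨x₀ + v, hxv, rfl⟩
        have h2 : lift v 0 = lift (x₀ + v) r - lift x₀ r := by
          rw [lift_sub]
          norm_num
        rw [h2]
        exact Submodule.sub_mem _ h1 hp₀span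
      have hwrepr : w = t • lift x₀ r + lift v 0 := by rw [hveq]; abel
      rw [hwrepr]
      exact Submodule.add_mem _ (Submodule.smul_mem _ _ hp₀span) hvspan
  · -- the distance identity
    set q0 : EuclideanSpace ℝ (Fin d) :=
      x₀ - (Submodule.orthogonalProjection V x₀ : EuclideanSpace ℝ (Fin d)) with hq0
    have hq0orth : q0 ∈ Vᗮ := V.sub_starProjection_mem_orthogonal x₀
    have hq0A : q0 ∈ A := by
      rw [hAdef, AffineSubspace.mem_mk']
      show q0 - x₀ ∈ V
      have h1 : q0 - x₀ = -(Submodule.orthogonalProjection V x₀ : EuclideanSpace ℝ (Fin d)) := by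
        rw [hq0]; abel
      rw [h1]
      exact V.neg_mem (Submodule.orthogonalProjection V x₀).2
    have hq0inner : ∀ v ∈ V, ⟪q0, v⟫ = 0 := by
      intro v hv
      have := (Submodule.mem_orthogonal V q0).1 hq0orth v hv
      rwa [real_inner_comm] at this
    set δ : ℝ := ‖q0‖ with hδdef
    have horth0 : ∀ w ∈ (A : Set (EuclideanSpace ℝ (Fin d))),
        ⟪(0 : EuclideanSpace ℝ (Fin d)) - q0, q0 - w⟫ = 0 := by
      intro w hw
      have h1 : w - x₀ ∈ V := (AffineSubspace.mem_mk').1 hw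
      have h2 : q0 - x₀ ∈ V := (AffineSubspace.mem_mk').1 hq0A
      have hwv : q0 - w ∈ V := by
        have h3 : q0 - w = (q0 - x₀) - (w - x₀) := by abel
        rw [h3]; exact V.sub_mem h2 h1
      rw [zero_sub, inner_neg_left, hq0inner _ hwv, neg_zero]
    have hδ : Metric.infDist 0 (A : Set (EuclideanSpace ℝ (Fin d))) = δ := by
      have h := infDist_eq_of_orth (0 : EuclideanSpace ℝ (Fin d)) q0 _ hq0A horth0
      rwa [zero_sub, norm_neg] at h
    set c : ℝ := δ ^ 2 + r ^ 2 with hc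
    have hcpos : 0 < c := by
      have h1 : (0:ℝ) ≤ δ ^ 2 := sq_nonneg _
      nlinarith
    set t₀ : ℝ := r ^ 2 / c with ht₀
    set P : EuclideanSpace ℝ (Fin (d + 1)) := lift q0 r with hP
    have hPS : P ∈ S' := (hA q0).1 hq0A
    have hu : r • e = lift (0 : EuclideanSpace ℝ (Fin d)) r := by
      rw [he, lift_smul, smul_zero, mul_one]
    have hdiffeq : r • e - t₀ • P = lift (0 - t₀ • q0) (r - t₀ * r) := by
      rw [hu, hP, lift_smul, lift_sub]
    have hperp : ∀ x ∈ S', ⟪r • e - t₀ • P, x⟫ = 0 := by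
      intro x hx
      set s : ℝ := x (Fin.last d) / r with hs
      have hxP : x - s • P ∈ S' := S'.sub_mem hx (S'.smul_mem _ hPS)
      have hlast : (x - s • P) (Fin.last d) = 0 := by
        have hPl : P (Fin.last d) = r := lift_apply_last _ _
        simp only [PiLp.sub_apply, PiLp.smul_apply, hPl, hs, smul_eq_mul]
        field_simp
        ring
      set v : EuclideanSpace ℝ (Fin d) := WithLp.toLp 2 fun (i : Fin d) => (x - s • P) i.castSucc with hv
      have hveq : lift v 0 = x - s • P := by
        rw [← hlast]; exact lift_self _
      have hvV : v ∈ V := by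
        show L v ∈ S'
        rw [hLapp, hveq]
        exact hxP
      have hxeq : x = s • P + lift v 0 := by rw [hveq]; abel
      rw [hxeq, inner_add_right, real_inner_smul_right]
      have h1 : ⟪r • e - t₀ • P, P⟫ = 0 := by
        rw [hdiffeq, hP, inner_lift]
        have h2 : ⟪(0 : EuclideanSpace ℝ (Fin d)) - t₀ • q0, q0⟫ = -(t₀ * δ ^ 2) := by
          rw [zero_sub, inner_neg_left, real_inner_smul_left, real_inner_self_eq_norm_sq,
            ← hδdef]
        rw [h2, ht₀]
        field_simp
        ring
      have h2 : ⟪r • e - t₀ • P, lift v 0⟫ = 0 := by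
        rw [hdiffeq, inner_lift, mul_zero, add_zero, zero_sub, inner_neg_left,
          real_inner_smul_left, hq0inner v hvV]
        ring
      rw [h1, h2]
      ring
    have hdist : Metric.infDist (r • e) (S' : Set (EuclideanSpace ℝ (Fin (d + 1)))) =
        ‖r • e - t₀ • P‖ := by
      apply infDist_eq_of_orth _ _ _ (S'.smul_mem t₀ hPS)
      intro w hw
      exact hperp _ (S'.sub_mem (S'.smul_mem t₀ hPS) hw)
    have hsq : ‖r • e - t₀ • P‖ ^ 2 = r ^ 2 * δ ^ 2 / c := by
      rw [hdiffeq, norm_lift_sq]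
      have h0 : ‖(0 : EuclideanSpace ℝ (Fin d)) - t₀ • q0‖ ^ 2 = t₀ ^ 2 * δ ^ 2 := by
        rw [zero_sub, norm_neg, norm_smul, Real.norm_eq_abs, mul_pow, sq_abs, ← hδdef]
      rw [h0, ht₀]
      field_simp
      ring
    have hspos : 0 < Real.sqrt c := Real.sqrt_pos.2 hcpos
    have hnormval : ‖r • e - t₀ • P‖ = r * δ / Real.sqrt c := by
      have hnn : (0:ℝ) ≤ r * δ / Real.sqrt c := by positivity
      calc ‖r • e - t₀ • P‖ = Real.sqrt (‖r • e - t₀ • P‖ ^ 2) :=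
            (Real.sqrt_sq (norm_nonneg _)).symm
        _ = Real.sqrt ((r * δ / Real.sqrt c) ^ 2) := by
            rw [hsq, div_pow, mul_pow, Real.sq_sqrt hcpos.le]
        _ = r * δ / Real.sqrt c := Real.sqrt_sq hnn
    rw [hdist, hδ, hnormval, ← hc]
    field_simp
end

section
/- Let d ≥ 1 be an integer, k ∈ {0,…,d−1}, z ≥ 1 a real number, and ε ∈ (0, 1/(2^{z+1}+2)]. Let P be a finite nonempty set of points in ℝ^d, set ψ = (ε/z)^z, r = 1 + max_{q∈P} D_z(q, 0_d)/(ψ·ε²), and e_{d+1} = (0,…,0,1) ∈ ℝ^{d+1}. Let p ∈ P with lifted point p' = (p | r) ∈ ℝ^{d+1}, and let S' be a (k+1)-dimensional linear subspace of ℝ^{d+1} that is orthogonal to e_{d+1}. Then |D_z(r·e_{d+1}, S') − D_z(p', S')| ≤ 2ε·D_z(r·e_{d+1}, S'). -/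
set_option maxHeartbeats 1000000


open scoped RealInnerProductSpace

lemma lift_decomp {d : ℕ} (q : EuclideanSpace ℝ (Fin d)) (s : ℝ) :
    lift q s = lift q 0 + s • lift (0 : EuclideanSpace ℝ (Fin d)) 1 := by
  ext i
  refine Fin.lastCases ?_ ?_ i <;> simp [lift]

lemma norm_lift_zero {d : ℕ} (q : EuclideanSpace ℝ (Fin d)) : ‖lift q 0‖ = ‖q‖ := by
  rw [EuclideanSpace.norm_eq, EuclideanSpace.norm_eq]
  congr 1
  rw [Fin.sum_univ_castSucc]
  simp [lift]

lemma inner_lift_s9 {d : ℕ} (q q' : EuclideanSpace ℝ (Fin d)) (s s' : ℝ) :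
    ⟪lift q s, lift q' s'⟫ = ⟪q, q'⟫ + s * s' := by
  simp [lift, PiLp.inner_apply, Fin.sum_univ_castSucc, RCLike.inner_apply, mul_comm]


lemma exp_le_one_add_two (x : ℝ) (hx0 : 0 ≤ x) (hx : x ≤ 1/2) :
    Real.exp x ≤ 1 + 2 * x := by
  have h1 : 1 - x ≤ Real.exp (-x) := by
    have := Real.add_one_le_exp (-x); linarith
  have h2 : Real.exp (-x) = (Real.exp x)⁻¹ := Real.exp_neg x
  have h3 : 0 < Real.exp x := Real.exp_pos x
  rw [h2] at h1
  have h4 : (1 - x) * Real.exp x ≤ 1 := by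
    calc (1-x) * Real.exp x ≤ (Real.exp x)⁻¹ * Real.exp x :=
      mul_le_mul_of_nonneg_right h1 h3.le
    _ = 1 := inv_mul_cancel₀ h3.ne'
  nlinarith

lemma scalar_key (z ε ψ r D : ℝ) (hz : 1 ≤ z) (hε0 : 0 < ε) (hε1 : ε ≤ 1/6)
    (hψ : ψ = (ε / z) ^ z) (hD : 0 ≤ D) (hr : 1 + D ^ z / (ψ * ε ^ 2) ≤ r) :
    (D ^ 2 + r ^ 2) ^ (z / 2) ≤ (1 + 2 * ε) * r ^ z := by
  have hz0 : (0:ℝ) < z := lt_of_lt_of_le one_pos hz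
  have hεz : (0:ℝ) < ε / z := div_pos hε0 hz0
  have hψ0 : 0 < ψ := hψ ▸ Real.rpow_pos_of_pos hεz z
  set c : ℝ := ψ * ε ^ 2 with hc_def
  have hc : 0 < c := by positivity
  have hr1 : 1 ≤ r := by
    have : 0 ≤ D ^ z / c := div_nonneg (Real.rpow_nonneg hD z) hc.le
    linarith
  have hr0 : (0:ℝ) < r := lt_of_lt_of_le one_pos hr1
  set u : ℝ := c ^ (1 / z) with hu_def
  have hu : 0 < u := Real.rpow_pos_of_pos hc (1/z)
  have huz : u ^ z = c := by
    rw [hu_def, ← Real.rpow_mul hc.le, one_div_mul_cancel hz0.ne', Real.rpow_one]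
  -- Step 2 : u ≤ ε / z
  have hu_le : u ≤ ε / z := by
    have h1 : u = ψ ^ (1/z) * (ε ^ 2) ^ ((1:ℝ)/z) := by
      rw [hu_def, hc_def, Real.mul_rpow hψ0.le (by positivity)]
    have h2 : ψ ^ (1/z) = ε / z := by
      rw [hψ, ← Real.rpow_mul hεz.le, mul_one_div_cancel hz0.ne', Real.rpow_one]
    have h3 : (ε ^ 2) ^ ((1:ℝ)/z) ≤ 1 := by
      apply Real.rpow_le_one (by positivity) (by nlinarith) (by positivity)
    calc u = (ε / z) * (ε ^ 2) ^ ((1:ℝ)/z) := by rw [h1, h2]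
    _ ≤ (ε / z) * 1 := by exact mul_le_mul_of_nonneg_left h3 hεz.le
    _ = ε / z := mul_one _
  -- Step 1 : D ≤ u * r
  have hDur : D ≤ u * r := by
    rcases le_or_gt D u with h | h
    · calc D ≤ u := h
      _ ≤ u * r := le_mul_of_one_le_right hu.le hr1
    · have h1 : u ^ (z - 1) ≤ D ^ (z - 1) :=
        Real.rpow_le_rpow hu.le h.le (by linarith)
      have hDz : u * D ^ z ≤ u * r * c := by
        have : D ^ z / c ≤ r := by
          have : 0 ≤ D ^ z / c := div_nonneg (Real.rpow_nonneg hD z) hc.le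
          linarith
        calc u * D ^ z = u * (D ^ z / c) * c := by field_simp
        _ ≤ u * r * c := by
          apply mul_le_mul_of_nonneg_right _ hc.le
          exact mul_le_mul_of_nonneg_left this hu.le
      have husplit : u ^ z = u ^ (z - 1) * u := by
        rw [← Real.rpow_add_one hu.ne' (z-1)]; ring_nf
      have hDsplit : D ^ z = D ^ (z - 1) * D := by
        rw [← Real.rpow_add_one (hu.trans h).ne' (z-1)]; ring_nf
      have key : D * c ≤ u * D ^ z := by
        rw [← huz, husplit, hDsplit]
        nlinarith [mul_le_mul_of_nonneg_left h1 (by positivity : (0:ℝ) ≤ u * D)]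
      -- so D ≤ u * D^z / c ≤ u * r
      nlinarith [hDz]
  -- Step 3/4
  have hs : D ^ 2 + r ^ 2 ≤ r ^ 2 * (1 + (ε/z)^2) := by
    have h2 : D ≤ (ε/z) * r := le_trans hDur (by nlinarith)
    nlinarith
  have step4 : (D ^ 2 + r ^ 2) ^ (z/2) ≤ r ^ z * (1 + (ε/z)^2) ^ (z/2) := by
    calc (D ^ 2 + r ^ 2) ^ (z/2) ≤ (r ^ 2 * (1 + (ε/z)^2)) ^ (z/2) :=
      Real.rpow_le_rpow (by positivity) hs (by positivity)
    _ = (r ^ 2 : ℝ) ^ (z/2) * (1 + (ε/z)^2) ^ (z/2) :=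
      Real.mul_rpow (by positivity) (by positivity)
    _ = r ^ z * (1 + (ε/z)^2) ^ (z/2) := by
      rw [← Real.rpow_natCast r 2, ← Real.rpow_mul hr0.le]
      congr 1
      push_cast
      ring
  -- Step 5
  have step5 : (1 + (ε/z)^2) ^ (z/2) ≤ 1 + 2 * ε := by
    set s : ℝ := (ε/z)^2 with hs_def
    have hs0 : 0 ≤ s := sq_nonneg _
    have h1s : (0:ℝ) < 1 + s := by linarith
    set x : ℝ := z/2 * s with hx_def
    have hxε : x ≤ ε := by
      have : z / 2 * s = ε ^ 2 / (2 * z) := by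
        rw [hs_def]; field_simp
      rw [hx_def, this]
      rw [div_le_iff₀ (by positivity)]
      nlinarith
    have hx0 : 0 ≤ x := by positivity
    have hx12 : x ≤ 1/2 := by linarith
    have e1 : (1 + s) ^ (z/2) ≤ Real.exp x := by
      rw [Real.rpow_def_of_pos h1s]
      apply Real.exp_le_exp.2
      have hlog : Real.log (1 + s) ≤ s := by
        have := Real.log_le_sub_one_of_pos h1s
        linarith
      calc Real.log (1+s) * (z/2) ≤ s * (z/2) :=
        mul_le_mul_of_nonneg_right hlog (by positivity)
      _ = x := by rw [hx_def]; ring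
    have e2 : Real.exp x ≤ 1 + 2 * x := exp_le_one_add_two x hx0 hx12
    calc (1 + s) ^ (z/2) ≤ 1 + 2 * x := le_trans e1 e2
    _ ≤ 1 + 2 * ε := by linarith
  calc (D ^ 2 + r ^ 2) ^ (z/2) ≤ r ^ z * (1 + (ε/z)^2) ^ (z/2) := step4
  _ ≤ r ^ z * (1 + 2 * ε) := by
    apply mul_le_mul_of_nonneg_left step5 (Real.rpow_nonneg hr0.le z)
  _ = (1 + 2 * ε) * r ^ z := mul_comm _ _


variable {E : Type*} [NormedAddCommGroup E] [InnerProductSpace ℝ E]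

lemma key_norm (S : Submodule ℝ E) (e x : E) (he1 : ‖e‖ = 1)
    (hx : ⟪x, e⟫ = 0) (horth : ∀ y ∈ S, ⟪y, e⟫ = (0:ℝ)) (r : ℝ)
    {y : E} (hy : y ∈ S) :
    ‖(x + r • e) - y‖ ^ 2 = ‖x - y‖ ^ 2 + r ^ 2 := by
  have h1 : (x + r • e) - y = (x - y) + r • e := by abel
  have h2 : ⟪x - y, r • e⟫ = 0 := by
    rw [inner_sub_left, real_inner_smul_right, real_inner_smul_right, hx, horth y hy]
    ring
  rw [h1, norm_add_sq_real, h2, norm_smul]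
  simp [he1, mul_pow, abs_sq]

lemma infDist_lower (S : Submodule ℝ E) (e x : E) (he1 : ‖e‖ = 1)
    (hx : ⟪x, e⟫ = 0) (horth : ∀ y ∈ S, ⟪y, e⟫ = (0:ℝ)) {r : ℝ} (hr : 0 ≤ r) :
    r ≤ Metric.infDist (x + r • e) (S : Set E) := by
  by_contra hlt
  push_neg at hlt
  obtain ⟨y, hy, hdy⟩ := (Metric.infDist_lt_iff ⟨0, S.zero_mem⟩).1 hlt
  have := key_norm S e x he1 hx horth r hy
  have h0 : (0:ℝ) ≤ ‖(x + r • e) - y‖ := norm_nonneg _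
  have hd : dist (x + r • e) y = ‖(x + r • e) - y‖ := dist_eq_norm _ _
  nlinarith [sq_nonneg (‖x - y‖)]

lemma infDist_upper [FiniteDimensional ℝ E] (S : Submodule ℝ E) (e x : E) (he1 : ‖e‖ = 1)
    (hx : ⟪x, e⟫ = 0) (horth : ∀ y ∈ S, ⟪y, e⟫ = (0:ℝ)) (r : ℝ) :
    Metric.infDist (x + r • e) (S : Set E) ^ 2 ≤ Metric.infDist x (S : Set E) ^ 2 + r ^ 2 := by
  obtain ⟨y, hy, hy2⟩ := (Submodule.closed_of_finiteDimensional S).exists_infDist_eq_dist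
    ⟨0, S.zero_mem⟩ x
  have h1 : Metric.infDist (x + r • e) (S : Set E) ≤ dist (x + r • e) y :=
    Metric.infDist_le_dist_of_mem hy
  have h2 := key_norm S e x he1 hx horth r hy
  have h3 : (0:ℝ) ≤ Metric.infDist (x + r • e) (S : Set E) := Metric.infDist_nonneg
  have hd : dist (x + r • e) y = ‖(x + r • e) - y‖ := dist_eq_norm _ _
  have hd2 : dist x y = ‖x - y‖ := dist_eq_norm _ _
  nlinarith [Metric.infDist_nonneg (x := x) (s := (S : Set E))]


/-- With `z ≥ 1`, `ε ∈ (0, 1/(2^{z+1}+2)]`, `ψ = (ε/z)^z`,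
`r = 1 + max_{q∈P} dist(q,0)^z/(ψε²)`, `e_{d+1} = (0,…,0,1)`, `p ∈ P`, `p' = (p | r)`:
if `S'` is a `(k+1)`-dimensional linear subspace of `ℝ^{d+1}` orthogonal to `e_{d+1}`,
then `|D_z(r·e_{d+1},S') − D_z(p',S')| ≤ 2ε·D_z(r·e_{d+1},S')`. -/
theorem stmt9 (d k : ℕ) (hd : 1 ≤ d) (hk : k ≤ d - 1)
    (z ε : ℝ) (hz : 1 ≤ z) (hε : ε ∈ Set.Ioc (0 : ℝ) (1 / (2 ^ (z + 1) + 2)))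
    (P : Finset (EuclideanSpace ℝ (Fin d))) (hP : P.Nonempty)
    (p : EuclideanSpace ℝ (Fin d)) (hp : p ∈ P)
    (ψ r : ℝ) (hψ : ψ = (ε / z) ^ z)
    (hr : r = 1 + P.sup' hP fun q => dist q 0 ^ z / (ψ * ε ^ 2))
    (e : EuclideanSpace ℝ (Fin (d + 1))) (he : e = lift 0 1)
    (p' : EuclideanSpace ℝ (Fin (d + 1))) (hp' : p' = lift p r)
    (S' : Submodule ℝ (EuclideanSpace ℝ (Fin (d + 1))))
    (hdim : Module.finrank ℝ S' = k + 1)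
    (horth : ∀ y ∈ S', ⟪y, e⟫ = (0 : ℝ)) :
    |Metric.infDist (r • e) (S' : Set (EuclideanSpace ℝ (Fin (d + 1)))) ^ z -
        Metric.infDist p' (S' : Set (EuclideanSpace ℝ (Fin (d + 1)))) ^ z| ≤
      2 * ε * Metric.infDist (r • e) (S' : Set (EuclideanSpace ℝ (Fin (d + 1)))) ^ z := by
  obtain ⟨hε0, hε2⟩ := hε
  have hz0 : (0:ℝ) < z := lt_of_lt_of_le one_pos hz
  have hε1 : ε ≤ 1/6 := by
    have h4 : (4:ℝ) ≤ 2 ^ (z + 1) := by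
      have : (2:ℝ) ^ (2:ℝ) ≤ 2 ^ (z + 1) :=
        Real.rpow_le_rpow_of_exponent_le one_le_two (by linarith)
      rw [show ((2:ℝ):ℝ) = ((2:ℕ):ℝ) by norm_num, Real.rpow_natCast] at this
      norm_num at this
      linarith
    have hpos : (0:ℝ) < 2 ^ (z + 1) + 2 := by linarith
    calc ε ≤ 1 / (2 ^ (z + 1) + 2) := hε2
    _ ≤ 1 / 6 := by
      apply one_div_le_one_div_of_le (by norm_num)
      linarith
  have hψ0 : 0 < ψ := hψ ▸ Real.rpow_pos_of_pos (div_pos hε0 hz0) z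
  have hc : (0:ℝ) < ψ * ε ^ 2 := by positivity
  -- basic facts about e, p₀
  have he1 : ‖e‖ = 1 := by
    have h : ⟪e, e⟫ = 1 := by
      rw [he, inner_lift_s9]; simp
    have := real_inner_self_eq_norm_sq e
    nlinarith [norm_nonneg e]
  set p₀ : EuclideanSpace ℝ (Fin (d + 1)) := lift p 0 with hp₀
  have hp₀e : ⟪p₀, e⟫ = 0 := by
    rw [hp₀, he, inner_lift_s9]; simp
  have h0e : ⟪(0 : EuclideanSpace ℝ (Fin (d + 1))), e⟫ = 0 := inner_zero_left e
  have hp'dec : p' = p₀ + r • e := by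
    rw [hp', hp₀, he]
    exact lift_decomp p r
  -- r ≥ 1 and r bound
  have hsup : dist p 0 ^ z / (ψ * ε ^ 2) ≤ P.sup' hP fun q => dist q 0 ^ z / (ψ * ε ^ 2) :=
    Finset.le_sup' (fun q => dist q 0 ^ z / (ψ * ε ^ 2)) hp
  have hrp : 1 + dist p 0 ^ z / (ψ * ε ^ 2) ≤ r := by rw [hr]; linarith
  have hr1 : (1:ℝ) ≤ r := by
    have : (0:ℝ) ≤ dist p 0 ^ z / (ψ * ε ^ 2) :=
      div_nonneg (Real.rpow_nonneg dist_nonneg z) hc.le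
    linarith
  have hr0 : (0:ℝ) ≤ r := by linarith
  -- D and its bound
  set S : Set (EuclideanSpace ℝ (Fin (d + 1))) := (S' : Set (EuclideanSpace ℝ (Fin (d + 1)))) with hS
  set D : ℝ := Metric.infDist p₀ S with hD
  have hD0 : 0 ≤ D := Metric.infDist_nonneg
  have hDp : D ≤ dist p 0 := by
    have h1 : D ≤ dist p₀ 0 := Metric.infDist_le_dist_of_mem S'.zero_mem
    have h2 : dist p₀ 0 = dist p 0 := by
      rw [dist_eq_norm, dist_eq_norm, sub_zero, sub_zero, hp₀, norm_lift_zero]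
    rwa [h2] at h1
  have hrD : 1 + D ^ z / (ψ * ε ^ 2) ≤ r := by
    have h1 : D ^ z ≤ dist p 0 ^ z := Real.rpow_le_rpow hD0 hDp hz0.le
    have h2 : D ^ z / (ψ * ε ^ 2) ≤ dist p 0 ^ z / (ψ * ε ^ 2) := by gcongr
    linarith
  -- infDist (r • e) S = r
  have hre : Metric.infDist (r • e) S = r := by
    have hlow : r ≤ Metric.infDist (0 + r • e) S :=
      infDist_lower S' e 0 he1 h0e horth hr0
    have hup : Metric.infDist (0 + r • e) S ^ 2 ≤ Metric.infDist 0 S ^ 2 + r ^ 2 :=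
      infDist_upper S' e 0 he1 h0e horth r
    have h0m : Metric.infDist (0 : EuclideanSpace ℝ (Fin (d+1))) S = 0 :=
      Metric.infDist_zero_of_mem S'.zero_mem
    rw [zero_add] at hlow hup
    rw [h0m] at hup
    have hn : 0 ≤ Metric.infDist (r • e) S := Metric.infDist_nonneg
    nlinarith
  -- infDist p' S bounds
  set A : ℝ := Metric.infDist p' S with hA
  have hAlow : r ≤ A := by
    rw [hA, hp'dec]
    exact infDist_lower S' e p₀ he1 hp₀e horth hr0
  have hAup : A ^ 2 ≤ D ^ 2 + r ^ 2 := by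
    rw [hA, hD, hp'dec]
    exact infDist_upper S' e p₀ he1 hp₀e horth r
  have hA0 : (0:ℝ) ≤ A := le_trans hr0 hAlow
  -- main inequality
  have hkey : A ^ z ≤ (1 + 2 * ε) * r ^ z := by
    have h1 : A ^ z = (A ^ (2:ℕ)) ^ (z / 2) := by
      rw [← Real.rpow_natCast A 2, ← Real.rpow_mul hA0]
      congr 1
      push_cast
      ring
    have h2 : (A ^ (2:ℕ)) ^ (z / 2) ≤ (D ^ 2 + r ^ 2) ^ (z / 2) :=
      Real.rpow_le_rpow (by positivity) hAup (by positivity)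
    have h3 := scalar_key z ε ψ r D hz hε0 hε1 hψ hD0 hrD
    calc A ^ z = (A ^ (2:ℕ)) ^ (z / 2) := h1
    _ ≤ (D ^ 2 + r ^ 2) ^ (z / 2) := h2
    _ ≤ (1 + 2 * ε) * r ^ z := h3
  have hrz : r ^ z ≤ A ^ z := Real.rpow_le_rpow hr0 hAlow hz0.le
  have hrzpos : (0:ℝ) ≤ r ^ z := Real.rpow_nonneg hr0 z
  rw [hre, abs_le]
  constructor <;> nlinarith
end

section
/- Let d ≥ 1 be an integer, k ∈ {0,…,d−1}, z ≥ 1 a real number, and ε ∈ (0, 1/(2^{z+1}+2)]. Let P be a finite nonempty set of points in ℝ^d, set ψ = (ε/z)^z, r = 1 + max_{q∈P} D_z(q, 0_d)/(ψ·ε²), c₀ = (εr)^{1/z} / √((εr)^{2/z} + r²), and e_{d+1} = (0,…,0,1) ∈ ℝ^{d+1}. Let p ∈ P with lifted point p' = (p | r) ∈ ℝ^{d+1}, and let S' be a (k+1)-dimensional linear subspace of ℝ^{d+1} with dist(r·e_{d+1}, S') ≥ c₀·r. Then (1 − (2^z+1)ε)·D_z(r·e_{d+1}, S') ≤ D_z(p',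 S') ≤ (1 + (2^z+1)ε)·D_z(r·e_{d+1}, S'). -/
private lemma aux_exp_le {t : ℝ} (ht0 : 0 ≤ t) (ht : t ≤ 1/4) :
    Real.exp t ≤ 1 + 2*t := by
  have ha := Real.add_one_le_exp (-t)
  rw [Real.exp_neg] at ha
  have hc : (0:ℝ) < Real.exp t := Real.exp_pos t
  have hd : (1 - t) * Real.exp t ≤ 1 := by
    have := mul_le_mul_of_nonneg_right ha hc.le
    rw [inv_mul_cancel₀ hc.ne'] at this
    nlinarith
  nlinarith

set_option maxHeartbeats 1000000 in
/-- With `z ≥ 1`, `ε ∈ (0, 1/(2^{z+1}+2)]`, `ψ = (ε/z)^z`,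
`r = 1 + max_{q∈P} dist(q,0)^z/(ψε²)`, `c₀ = (εr)^{1/z}/√((εr)^{2/z}+r²)`,
`e_{d+1} = (0,…,0,1)`, `p ∈ P`, `p' = (p | r)`: if `S'` is a `(k+1)`-dimensional linear
subspace of `ℝ^{d+1}` with `dist(r·e_{d+1},S') ≥ c₀·r`, then
`(1−(2^z+1)ε)·D_z(r·e_{d+1},S') ≤ D_z(p',S') ≤ (1+(2^z+1)ε)·D_z(r·e_{d+1},S')`. -/
theorem stmt10 (d k : ℕ) (hd : 1 ≤ d) (hk : k ≤ d - 1)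
    (z ε : ℝ) (hz : 1 ≤ z) (hε : ε ∈ Set.Ioc (0 : ℝ) (1 / (2 ^ (z + 1) + 2)))
    (P : Finset (EuclideanSpace ℝ (Fin d))) (hP : P.Nonempty)
    (p : EuclideanSpace ℝ (Fin d)) (hp : p ∈ P)
    (ψ r c₀ : ℝ) (hψ : ψ = (ε / z) ^ z)
    (hr : r = 1 + P.sup' hP fun q => dist q 0 ^ z / (ψ * ε ^ 2))
    (hc₀ : c₀ = (ε * r) ^ (1 / z) / Real.sqrt ((ε * r) ^ (2 / z) + r ^ 2))
    (e : EuclideanSpace ℝ (Fin (d + 1))) (he : e = lift 0 1)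
    (p' : EuclideanSpace ℝ (Fin (d + 1))) (hp' : p' = lift p r)
    (S' : Submodule ℝ (EuclideanSpace ℝ (Fin (d + 1))))
    (hdim : Module.finrank ℝ S' = k + 1)
    (hfar : c₀ * r ≤ Metric.infDist (r • e) (S' : Set (EuclideanSpace ℝ (Fin (d + 1))))) :
    (1 - (2 ^ z + 1) * ε) * Metric.infDist (r • e) (S' : Set (EuclideanSpace ℝ (Fin (d + 1)))) ^ z ≤
        Metric.infDist p' (S' : Set (EuclideanSpace ℝ (Fin (d + 1)))) ^ z ∧
      Metric.infDist p' (S' : Set (EuclideanSpace ℝ (Fin (d + 1)))) ^ z ≤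
        (1 + (2 ^ z + 1) * ε) *
          Metric.infDist (r • e) (S' : Set (EuclideanSpace ℝ (Fin (d + 1)))) ^ z := by
  obtain ⟨hε0, hεle⟩ := hε
  have hz0 : (0:ℝ) < z := lt_of_lt_of_le one_pos hz
  have hψ0 : 0 < ψ := hψ ▸ Real.rpow_pos_of_pos (div_pos hε0 hz0) z
  have hsup : dist p 0 ^ z / (ψ * ε ^ 2) ≤ r - 1 := by
    rw [hr]
    have := Finset.le_sup' (fun q => dist q 0 ^ z / (ψ * ε ^ 2)) hp
    linarith
  have hr1 : 1 ≤ r := by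
    have h0 : 0 ≤ dist p 0 ^ z / (ψ * ε ^ 2) :=
      div_nonneg (Real.rpow_nonneg dist_nonneg z) (by positivity)
    linarith
  have hr0 : 0 < r := lt_of_lt_of_le one_pos hr1
  have h2z : (2:ℝ) ≤ 2 ^ z := by
    calc (2:ℝ) = 2 ^ (1:ℝ) := (Real.rpow_one 2).symm
    _ ≤ 2 ^ z := Real.rpow_le_rpow_of_exponent_le one_le_two hz
  have h4z : (4:ℝ) ≤ 2 ^ (z+1) := by
    calc (4:ℝ) = 2 ^ ((2:ℕ):ℝ) := by rw [Real.rpow_natCast]; norm_num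
    _ ≤ 2 ^ (z+1) := Real.rpow_le_rpow_of_exponent_le one_le_two (by push_cast; linarith)
  have hε6 : ε ≤ 1/6 := by
    refine hεle.trans ?_
    rw [div_le_div_iff₀ (by linarith) (by norm_num)]
    linarith
  have hε1 : ε ≤ 1 := by linarith
  set δ := dist p 0 with hδdef
  have hδ0 : 0 ≤ δ := dist_nonneg
  have hδz : δ ^ z ≤ r * (ψ * ε ^ 2) := by
    have hde : (0:ℝ) < ψ * ε ^ 2 := by positivity
    have := (div_le_iff₀ hde).mp hsup
    nlinarith
  have hδ : δ ≤ r ^ (1/z) * ((ε/z) * ε ^ (2/z)) := by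
    have h1 : δ = (δ ^ z) ^ (1/z) := by
      rw [← Real.rpow_mul hδ0, mul_one_div, div_self hz0.ne', Real.rpow_one]
    have h2 : (δ ^ z) ^ (1/z) ≤ (r * (ψ * ε^2)) ^ (1/z) :=
      Real.rpow_le_rpow (Real.rpow_nonneg hδ0 z) hδz (by positivity)
    rw [h1]
    refine h2.trans_eq ?_
    rw [Real.mul_rpow hr0.le (by positivity), Real.mul_rpow hψ0.le (by positivity), hψ,
      ← Real.rpow_mul (by positivity : (0:ℝ) ≤ ε/z), mul_one_div, div_self hz0.ne',
      Real.rpow_one, ← Real.rpow_natCast ε 2, ← Real.rpow_mul hε0.le]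
    push_cast
    rw [mul_one_div]
  -- the distance between the lifted point and r•e is δ
  have hvec : p' - r • e = (lift p 0 : EuclideanSpace ℝ (Fin (d+1))) := by
    rw [hp', he]
    ext i
    refine Fin.lastCases ?_ ?_ i
    · simp [lift]
    · intro i; simp [lift]
  have hdist : dist p' (r • e) = δ := by
    rw [dist_eq_norm, hvec, hδdef, dist_zero_right, EuclideanSpace.norm_eq,
      EuclideanSpace.norm_eq, Fin.sum_univ_castSucc]
    simp [lift]
  set D := Metric.infDist (r • e) (S' : Set (EuclideanSpace ℝ (Fin (d + 1)))) with hDdef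
  set Dp := Metric.infDist p' (S' : Set (EuclideanSpace ℝ (Fin (d + 1)))) with hDpdef
  have hD0 : 0 ≤ D := Metric.infDist_nonneg
  have hDp0 : 0 ≤ Dp := Metric.infDist_nonneg
  have hub : Dp ≤ D + δ := by
    have h := Metric.infDist_le_infDist_add_dist (x := p') (y := r • e)
      (s := (S' : Set (EuclideanSpace ℝ (Fin (d + 1)))))
    rwa [hdist] at h
  have hlb : D ≤ Dp + δ := by
    have h := Metric.infDist_le_infDist_add_dist (x := r • e) (y := p')
      (s := (S' : Set (EuclideanSpace ℝ (Fin (d + 1)))))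
    rwa [dist_comm, hdist] at h
  have hεr : (0:ℝ) < ε * r := mul_pos hε0 hr0
  have hs2 : (1:ℝ) ≤ Real.sqrt 2 := by
    rw [show (1:ℝ) = Real.sqrt 1 from Real.sqrt_one.symm]
    exact Real.sqrt_le_sqrt one_le_two
  have hs2' : Real.sqrt 2 ≤ 1.5 := by
    nlinarith [Real.sq_sqrt (by norm_num : (0:ℝ) ≤ 2), Real.sqrt_nonneg 2]
  have hDlow : (ε*r) ^ (1/z) / Real.sqrt 2 ≤ D := by
    refine le_trans ?_ hfar
    rw [hc₀, div_mul_eq_mul_div]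
    have hden : Real.sqrt ((ε*r)^(2/z) + r^2) ≤ Real.sqrt 2 * r := by
      have h1 : (ε*r)^(2/z) ≤ r^(2/z) :=
        Real.rpow_le_rpow hεr.le (by nlinarith) (by positivity)
      have h2 : r^(2/z) ≤ r^2 := by
        calc r^(2/z) ≤ r^(((2:ℕ):ℝ)) :=
              Real.rpow_le_rpow_of_exponent_le hr1
                (by rw [div_le_iff₀ hz0]; push_cast; linarith)
        _ = r^2 := Real.rpow_natCast r 2
      calc Real.sqrt ((ε*r)^(2/z) + r^2) ≤ Real.sqrt (2*r^2) :=
            Real.sqrt_le_sqrt (by nlinarith)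
      _ = Real.sqrt 2 * r := by
            rw [Real.sqrt_mul (by norm_num), Real.sqrt_sq hr0.le]
    have heq : (ε*r)^(1/z) / Real.sqrt 2 = (ε*r)^(1/z) * r / (Real.sqrt 2 * r) := by
      rw [mul_comm (Real.sqrt 2) r, ← div_div, mul_div_assoc, div_self hr0.ne', mul_one]
    rw [heq]
    gcongr
  have hkey : δ ≤ (Real.sqrt 2 * ε / z) * D := by
    have e1 : ε^(2/z) ≤ ε^(1/z) :=
      Real.rpow_le_rpow_of_exponent_ge hε0 hε1 (by rw [div_le_div_iff₀ hz0 hz0]; nlinarith)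
    calc δ ≤ r^(1/z) * ((ε/z) * ε^(2/z)) := hδ
    _ ≤ r^(1/z) * ((ε/z) * ε^(1/z)) := by gcongr
    _ = (Real.sqrt 2 * ε / z) * ((ε*r)^(1/z) / Real.sqrt 2) := by
        rw [Real.mul_rpow hε0.le hr0.le]
        have : Real.sqrt 2 ≠ 0 := by positivity
        field_simp
    _ ≤ (Real.sqrt 2 * ε / z) * D := by gcongr
  set t := Real.sqrt 2 * ε with htdef
  have ht0 : 0 ≤ t := by positivity
  have ht14 : t ≤ 1/4 := by nlinarith
  have htz : t/z ≤ t := div_le_self ht0 hz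
  have htz0 : 0 ≤ t/z := by positivity
  have ht3 : 2 * t ≤ (2^z + 1) * ε := by nlinarith
  have hDz0 : 0 ≤ D ^ z := Real.rpow_nonneg hD0 z
  constructor
  · -- lower bound
    have h1 : D * (1 - t/z) ≤ Dp := by
      have hexp : D * (1 - t/z) = D - t/z * D := by ring
      linarith only [hlb, hkey, hexp]
    have h2 : (D * (1 - t/z)) ^ z ≤ Dp ^ z :=
      Real.rpow_le_rpow (mul_nonneg hD0 (by linarith)) h1 hz0.le
    have h3 : (D * (1 - t/z)) ^ z = D ^ z * (1 - t/z) ^ z :=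
      Real.mul_rpow hD0 (by linarith)
    have h4 : 1 - t ≤ (1 - t/z) ^ z := by
      have hber := one_add_mul_self_le_rpow_one_add (s := -(t/z)) (by linarith) hz
      have hzt : t / z * z = t := div_mul_cancel₀ _ hz0.ne'
      have heq1 : 1 + z * -(t/z) = 1 - t := by rw [mul_neg, mul_comm z (t/z), hzt]; ring
      have heq2 : 1 + -(t/z) = 1 - t/z := by ring
      rw [heq1, heq2] at hber
      exact hber
    have h5 : 1 - (2^z + 1) * ε ≤ 1 - t := by nlinarith
    calc (1 - (2^z + 1) * ε) * D ^ z ≤ (1 - t) * D ^ z :=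
          mul_le_mul_of_nonneg_right h5 hDz0
    _ ≤ (1 - t/z) ^ z * D ^ z := mul_le_mul_of_nonneg_right h4 hDz0
    _ = (D * (1 - t/z)) ^ z := by rw [h3]; ring
    _ ≤ Dp ^ z := h2
  · -- upper bound
    have h1 : Dp ≤ D * (1 + t/z) := by
      have hexp : D * (1 + t/z) = D + t/z * D := by ring
      linarith only [hub, hkey, hexp]
    have h2 : Dp ^ z ≤ (D * (1 + t/z)) ^ z :=
      Real.rpow_le_rpow hDp0 h1 hz0.le
    have h3 : (D * (1 + t/z)) ^ z = D ^ z * (1 + t/z) ^ z :=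
      Real.mul_rpow hD0 (by linarith)
    have h4 : (1 + t/z) ^ z ≤ Real.exp t := by
      calc (1 + t/z) ^ z ≤ (Real.exp (t/z)) ^ z := by
            apply Real.rpow_le_rpow (by positivity) ?_ hz0.le
            linarith [Real.add_one_le_exp (t/z)]
      _ = Real.exp t := by rw [← Real.exp_mul, div_mul_cancel₀ _ hz0.ne']
    have h5 : Real.exp t ≤ 1 + 2*t := aux_exp_le ht0 ht14
    have h6 : 1 + 2*t ≤ 1 + (2^z + 1) * ε := by linarith
    calc Dp ^ z ≤ D ^ z * (1 + t/z) ^ z := by rw [← h3]; exact h2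
    _ ≤ D ^ z * (1 + (2^z + 1) * ε) :=
          mul_le_mul_of_nonneg_left (by linarith) hDz0
    _ = (1 + (2^z + 1) * ε) * D ^ z := by ring
end
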